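/- arXiv:2305.02545 — 2 statements merged into one kernel-verified Lean document; each statement's English description precedes it below -/
import Mathlib

section
/- Let G be an α_i-metric graph and k a positive integer. Every vertex v with e(v) ≤ rad(G)+k satisfies d(v, C(G)) ≤ k+i. Consequently, for every vertex v, d(v,C(G)) + rad(G) ≥ e(v) ≥ d(v,C(G)) + rad(G) - i. -/
open SimpleGraph

variable {V : Type*}

/-- `Itv G u v x` means `x` lies on a shortest `(u,v)`-path, i.e. `x ∈ I(u,v)`. -/
def Itv (G : SimpleGraph V) (u v x : V) : Prop :=
  G.dist u x + G.dist x v = G.dist u v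

/-- `G` is an `α_i`-metric graph. -/
def AlphaI (G : SimpleGraph V) (i : ℕ) : Prop :=
  ∀ u v w x : V, Itv G u w v → Itv G v x w → G.Adj v w →
    G.dist u v + G.dist v x ≤ G.dist u x + i

/-- Eccentricity of a vertex. -/
noncomputable def ecc (G : SimpleGraph V) [Fintype V] (v : V) : ℕ :=
  Finset.univ.sup (fun u => G.dist v u)

/-- Radius of the graph. -/
noncomputable def grad (G : SimpleGraph V) [Fintype V] [Nonempty V] : ℕ :=
  Finset.univ.inf' Finset.univ_nonempty (fun v => ecc G v)

/-- Diameter of the graph. -/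
noncomputable def gdiam (G : SimpleGraph V) [Fintype V] : ℕ :=
  Finset.univ.sup (fun v => ecc G v)

lemma dist_le_ecc (G : SimpleGraph V) [Fintype V] (v u : V) :
    G.dist v u ≤ ecc G v :=
  Finset.le_sup (f := fun u => G.dist v u) (Finset.mem_univ u)

lemma grad_le_ecc (G : SimpleGraph V) [Fintype V] [Nonempty V] (v : V) :
    grad G ≤ ecc G v :=
  Finset.inf'_le _ (Finset.mem_univ v)

lemma adj_dist_one {G : SimpleGraph V} {a b : V} (h : G.Adj a b) :
    G.dist a b = 1 :=
  SimpleGraph.dist_eq_one_iff_adj.mpr h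

/-- On a geodesic walk, the `j`-th vertex is at distance `j` from the start. -/
lemma geodesic_getVert {G : SimpleGraph V} (hG : G.Connected) {v c : V}
    (p : G.Walk v c) (hp : p.length = G.dist v c) {j : ℕ} (hj : j ≤ p.length) :
    G.dist v (p.getVert j) = j ∧ G.dist (p.getVert j) c = p.length - j := by
  have h1 : ∀ m, m ≤ p.length → G.dist v (p.getVert m) ≤ m := by
    intro m
    induction m with
    | zero => intro _; simp [p.getVert_zero]
    | succ n ih =>
      intro h
      have hadj : G.Adj (p.getVert n) (p.getVert (n + 1)) :=
        p.adj_getVert_succ (by omega)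
      calc G.dist v (p.getVert (n + 1))
          ≤ G.dist v (p.getVert n) + G.dist (p.getVert n) (p.getVert (n + 1)) :=
            hG.dist_triangle
        _ ≤ n + 1 := by
            have := ih (by omega)
            rw [adj_dist_one hadj]; omega
  have h2 : ∀ m, G.dist (p.getVert (p.length - m)) c ≤ m := by
    intro m
    induction m with
    | zero => simp [p.getVert_length]
    | succ n ih =>
      by_cases hc : p.length - (n + 1) = p.length - n
      · rw [hc]; omega
      · have hlt : p.length - (n + 1) < p.length := by omega
        have heq : p.length - (n + 1) + 1 = p.length - n := by omega
        have hadj : G.Adj (p.getVert (p.length - (n + 1)))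
            (p.getVert (p.length - n)) := by
          have := p.adj_getVert_succ hlt
          rwa [heq] at this
        calc G.dist (p.getVert (p.length - (n + 1))) c
            ≤ G.dist (p.getVert (p.length - (n + 1))) (p.getVert (p.length - n))
              + G.dist (p.getVert (p.length - n)) c := hG.dist_triangle
          _ ≤ n + 1 := by rw [adj_dist_one hadj]; omega
  have ha := h1 j hj
  have hb := h2 (p.length - j)
  rw [show p.length - (p.length - j) = j by omega] at hb
  have htri : G.dist v c ≤ G.dist v (p.getVert j) + G.dist (p.getVert j) c :=
    hG.dist_triangle
  constructor <;> omega

lemma key_part1 [Fintype V] [Nonempty V] (G : SimpleGraph V) (hG : G.Connected)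
    (i : ℕ) (hα : AlphaI G i) (k : ℕ) (v : V) (hv : ecc G v ≤ grad G + k) :
    ∃ c : V, ecc G c = grad G ∧ G.dist v c ≤ k + i := by
  obtain ⟨c, -, hc⟩ := Finset.exists_mem_eq_inf' (Finset.univ_nonempty (α := V))
    (fun v => ecc G v)
  have hc' : ecc G c = grad G := hc.symm
  by_cases hL : G.dist v c ≤ k + i
  · exact ⟨c, hc', hL⟩
  push_neg at hL
  obtain ⟨p, hp⟩ := (hG v c).exists_walk_length_eq_dist
  have hki : k + i ≤ p.length := by omega
  refine ⟨p.getVert (k + i), ?_, ?_⟩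
  · -- show the vertex at distance k+i on the geodesic is central
    have hecc : ecc G (p.getVert (k + i)) ≤ grad G := by
      apply Finset.sup_le
      intro x _
      -- walk from c towards getVert (k+i), distances to x stay ≤ grad G
      have claim : ∀ m, m ≤ p.length - (k + i) →
          G.dist (p.getVert (p.length - m)) x ≤ grad G := by
        intro m
        induction m with
        | zero =>
          intro _
          simp only [Nat.sub_zero, p.getVert_length]
          calc G.dist c x ≤ ecc G c := dist_le_ecc G c x
            _ = grad G := hc'
        | succ n ih =>
          intro hn
          set j := p.length - (n + 1) with hjdef
          have hj1 : j + 1 = p.length - n := by omega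
          have hjki : k + i ≤ j := by omega
          have hjlt : j < p.length := by omega
          set u := p.getVert j with hudef
          set t := p.getVert (j + 1) with htdef
          have iht : G.dist t x ≤ grad G := by
            have := ih (by omega)
            rwa [← hj1] at this
          by_contra hcon
          push_neg at hcon
          have hadj : G.Adj u t := p.adj_getVert_succ hjlt
          have hut : G.dist u t = 1 := adj_dist_one hadj
          have htu : G.dist t u = 1 := by rw [SimpleGraph.dist_comm]; exact hut
          have hux : G.dist u x ≤ 1 + G.dist t x := by
            calc G.dist u x ≤ G.dist u t + G.dist t x := hG.dist_triangle
              _ = 1 + G.dist t x := by rw [hut]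
          have htx' : G.dist t x ≤ 1 + G.dist u x := by
            calc G.dist t x ≤ G.dist t u + G.dist u x := hG.dist_triangle
              _ = 1 + G.dist u x := by rw [htu]
          have hux' : G.dist u x = grad G + 1 := by omega
          have htx : G.dist t x = grad G := by omega
          -- distances along the geodesic
          have hdu := geodesic_getVert hG p hp (j := j) (le_of_lt hjlt)
          have hdt := geodesic_getVert hG p hp (j := j + 1) (by omega)
          have hvu : G.dist v u = j := hdu.1
          have hvt : G.dist v t = j + 1 := hdt.1
          -- apply the alpha_i condition with (x, t, u, v)
          have hItv1 : Itv G x u t := by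
            unfold Itv
            have : G.dist x t = grad G := by rw [SimpleGraph.dist_comm]; exact htx
            have hxu : G.dist x u = grad G + 1 := by
              rw [SimpleGraph.dist_comm]; exact hux'
            rw [this, htu, hxu]
          have hItv2 : Itv G t v u := by
            unfold Itv
            have htv : G.dist t v = j + 1 := by rw [SimpleGraph.dist_comm]; exact hvt
            have huv : G.dist u v = j := by rw [SimpleGraph.dist_comm]; exact hvu
            rw [htu, huv, htv]; omega
          have halpha := hα x t u v hItv1 hItv2 hadj.symm
          -- d x t + d t v ≤ d x v + i
          have hxt : G.dist x t = grad G := by rw [SimpleGraph.dist_comm]; exact htx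
          have htv : G.dist t v = j + 1 := by rw [SimpleGraph.dist_comm]; exact hvt
          rw [hxt, htv] at halpha
          have hxv : G.dist x v = G.dist v x := SimpleGraph.dist_comm
          have hvx : G.dist v x ≤ ecc G v := dist_le_ecc G v x
          omega
      have := claim (p.length - (k + i)) le_rfl
      rwa [show p.length - (p.length - (k + i)) = k + i by omega] at this
    exact le_antisymm hecc (grad_le_ecc G _)
  · have := (geodesic_getVert hG p hp (j := k + i) hki).1
    rw [SimpleGraph.dist_comm] at this
    rw [SimpleGraph.dist_comm]
    omega

theorem stmt_10 [Fintype V] [Nonempty V] (G : SimpleGraph V) (hG : G.Connected) (i : ℕ)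
    (hα : AlphaI G i) :
    (∀ k : ℕ, 0 < k → ∀ v : V, ecc G v ≤ grad G + k →
      ∃ c : V, ecc G c = grad G ∧ G.dist v c ≤ k + i) ∧
    (∀ v : V,
      (∀ c : V, ecc G c = grad G → ecc G v ≤ G.dist v c + grad G) ∧
      (∃ c : V, ecc G c = grad G ∧ G.dist v c + grad G ≤ ecc G v + i)) := by
  constructor
  · intro k _ v hv
    exact key_part1 G hG i hα k v hv
  · intro v
    constructor
    · intro c hc
      apply Finset.sup_le
      intro x _
      calc G.dist v x ≤ G.dist v c + G.dist c x := hG.dist_triangle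
        _ ≤ G.dist v c + ecc G c := by
            have := dist_le_ecc G c x; omega
        _ = G.dist v c + grad G := by rw [hc]
    · have hge : grad G ≤ ecc G v := grad_le_ecc G v
      by_cases hv : ecc G v = grad G
      · exact ⟨v, hv, by simp [SimpleGraph.dist_self, hv]⟩
      · set k := ecc G v - grad G with hk
        have hkpos : 0 < k := by omega
        obtain ⟨c, hc, hd⟩ := key_part1 G hG i hα k v (by omega)
        exact ⟨c, hc, by omega⟩
end

section
/- Let G be an α_i-metric graph, x,y mutually distant vertices, c a middle vertex of a shortest (x,y)-path, and T a breadth-first-search (shortest-path) spanning tree of G rooted at c. Then every vertex v satisfies e_G(v) ≤ e_T(v) ≤ e_G(v) + 4i+3, where e_T denotes eccentricity in the tree T. -/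
open SimpleGraph

variable {V : Type*}

section Helpers

variable {G : SimpleGraph V}

private lemma dist_getVert_le (hG : G.Connected) {s e : V} (p : G.Walk s e) (m : ℕ) :
    G.dist s (p.getVert m) ≤ m := by
  induction m with
  | zero => simp [Walk.getVert_zero]
  | succ n ih =>
    by_cases h : n < p.length
    · have hadj := p.adj_getVert_succ h
      have h1 : G.dist (p.getVert n) (p.getVert (n + 1)) = 1 := dist_eq_one_iff_adj.mpr hadj
      have h2 := hG.dist_triangle (u := s) (v := p.getVert n) (w := p.getVert (n + 1))
      omega
    · push_neg at h
      have e1 : p.getVert (n + 1) = e := p.getVert_of_length_le (by omega)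
      have e2 : p.getVert n = e := p.getVert_of_length_le h
      rw [e1, ← e2]
      omega

private lemma dist_getVert_le' (hG : G.Connected) {s e : V} (p : G.Walk s e) (m : ℕ)
    (hm : m ≤ p.length) : G.dist (p.getVert m) e + m ≤ p.length := by
  induction p generalizing m with
  | nil =>
    simp only [Walk.length_nil, Nat.le_zero] at hm
    subst hm
    simp [Walk.getVert_zero]
  | @cons a' b' c' h q ih =>
    cases m with
    | zero =>
      simpa [Walk.getVert_zero] using dist_le (Walk.cons h q)
    | succ n =>
      have e1 : (Walk.cons h q).getVert (n + 1) = q.getVert n := by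
        simp [Walk.getVert_cons_succ]
      rw [e1]
      have hm' : n ≤ q.length := by simpa [Walk.length_cons] using hm
      have := ih n hm'
      simp only [Walk.length_cons]
      omega


private lemma exists_step (hG : G.Connected) {p q : V} (h : G.dist p q ≠ 0) :
    ∃ z, G.dist p z = 1 ∧ G.dist z q + 1 = G.dist p q := by
  obtain ⟨w, hw⟩ := hG.exists_walk_length_eq_dist p q
  have hl : 1 ≤ w.length := by omega
  have h1 : G.dist p (w.getVert 1) ≤ 1 := dist_getVert_le hG w 1
  have h2 : G.dist (w.getVert 1) q + 1 ≤ w.length := dist_getVert_le' hG w 1 hl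
  have h3 : G.dist p q ≤ G.dist p (w.getVert 1) + G.dist (w.getVert 1) q :=
    hG.dist_triangle
  exact ⟨w.getVert 1, by omega, by omega⟩

private lemma type_lemma (hG : G.Connected) {x y z w : V} {a b : ℕ}
    (hxy : G.dist x y = a + b) (hwx : G.dist x w = a) (hwy : G.dist y w = b)
    (hzw : G.dist z w = 1)
    (hnf : ¬(G.dist x z = a ∧ G.dist y z = b)) :
    G.dist x z = a + 1 ∨ G.dist y z = b + 1 := by
  have hwz : G.dist w z = 1 := by rw [SimpleGraph.dist_comm]; exact hzw
  have h1 : G.dist x z ≤ a + 1 := by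
    have := hG.dist_triangle (u := x) (v := w) (w := z); omega
  have h2 : G.dist y z ≤ b + 1 := by
    have := hG.dist_triangle (u := y) (v := w) (w := z); omega
  have h3 : G.dist x y ≤ G.dist x z + G.dist z y := hG.dist_triangle
  have h4 : G.dist z y = G.dist y z := SimpleGraph.dist_comm
  by_cases hx1 : G.dist x z = a + 1
  · exact Or.inl hx1
  by_cases hy1 : G.dist y z = b + 1
  · exact Or.inr hy1
  exfalso
  exact hnf (by constructor <;> omega)

private lemma core (hG : G.Connected) {i : ℕ} (hα : AlphaI G i) {x y c u w : V} {a b D : ℕ}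
    (hxc : G.dist x c = a) (hyc : G.dist y c = b) (hxy : G.dist x y = a + b)
    (ha : 1 ≤ a) (hD : 1 ≤ D) (hwc : G.dist w c = D)
    (hwx : G.dist x w = a) (hwy : G.dist y w = b)
    (huw : G.dist u w + D = G.dist u c)
    (hmin : ∀ z, G.dist u z + G.dist z c = G.dist u c → G.dist z c ≤ D →
      (G.dist x z = a ∧ G.dist y z = b))
    (hfire : G.dist u w + a ≤ G.dist u x + i ∨ G.dist u w + b ≤ G.dist u y + i) :
    G.dist u c + a ≤ G.dist u x + (2 * i + 1) ∨
    G.dist u c + b ≤ G.dist u y + (2 * i + 1) := by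
  classical
  have hcx : G.dist c x = a := by rw [SimpleGraph.dist_comm]; exact hxc
  obtain ⟨σ, hcσ, hσx⟩ := exists_step hG (p := c) (q := x) (by omega)
  rw [hcx] at hσx
  have hσy : G.dist y σ = b + 1 := by
    have hub : G.dist y σ ≤ b + 1 := by
      have := hG.dist_triangle (u := y) (v := c) (w := σ)
      omega
    have hlb : G.dist x y ≤ G.dist x σ + G.dist σ y := hG.dist_triangle
    have e1 : G.dist x σ = G.dist σ x := SimpleGraph.dist_comm
    have e2 : G.dist σ y = G.dist y σ := SimpleGraph.dist_comm
    omega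
  have hadj_cσ : G.Adj c σ := dist_eq_one_iff_adj.mp hcσ
  have hσc : G.dist σ c = 1 := by rw [SimpleGraph.dist_comm]; exact hcσ
  -- the σ-trick : u is at distance ≥ dist u c from σ
  have hσt : G.dist u c ≤ G.dist u σ := by
    by_contra hcon
    push_neg at hcon
    have htr : G.dist u c ≤ G.dist u σ + G.dist σ c := hG.dist_triangle
    have hIv : G.dist u σ + G.dist σ c = G.dist u c := by omega
    have hfl := (hmin σ hIv (by omega)).1
    have e3 : G.dist x σ = G.dist σ x := SimpleGraph.dist_comm
    omega
  -- trichotomy on dist w σ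
  have hwσub : G.dist w σ ≤ D + 1 := by
    have := hG.dist_triangle (u := w) (v := c) (w := σ)
    omega
  have hwσlb : D ≤ G.dist w σ := by
    by_contra h
    push_neg at h
    have := hG.dist_triangle (u := u) (v := w) (w := σ)
    omega
  rcases Nat.lt_or_ge (G.dist w σ) (D + 1) with hcase | hcase
  · -- main case : dist w σ = D
    have hwσ : G.dist w σ = D := by omega
    obtain ⟨g, hg⟩ := hG.exists_walk_length_eq_dist w σ
    have hgl : g.length = D := by rw [hg, hwσ]
    have hseg : ∀ m, m ≤ D → G.dist w (g.getVert m) = m ∧ G.dist (g.getVert m) σ + m = D := by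
      intro m hm
      have h5 := dist_getVert_le hG g m
      have h6 := dist_getVert_le' hG g m (by rw [hgl]; omega)
      rw [hgl] at h6
      have h7 : G.dist w σ ≤ G.dist w (g.getVert m) + G.dist (g.getVert m) σ :=
        hG.dist_triangle
      constructor <;> omega
    have hueq : ∀ m, m ≤ D → G.dist u (g.getVert m) = G.dist u w + m := by
      intro m hm
      have hw1 := (hseg m hm).1
      have hw2 := (hseg m hm).2
      have hub : G.dist u (g.getVert m) ≤ G.dist u w + G.dist w (g.getVert m) :=
        hG.dist_triangle
      have hlb : G.dist u σ ≤ G.dist u (g.getVert m) + G.dist (g.getVert m) σ :=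
        hG.dist_triangle
      omega
    have hstep : ∀ m, m < D → G.dist (g.getVert m) (g.getVert (m + 1)) = 1 := by
      intro m hm
      exact dist_eq_one_iff_adj.mpr (g.adj_getVert_succ (by rw [hgl]; omega))
    have hgD : g.getVert D = σ := by rw [← hgl]; exact g.getVert_length
    have hg0 : g.getVert 0 = w := g.getVert_zero
    -- the last index with x-level ≥ a
    set P : ℕ → Prop := fun m => a ≤ G.dist x (g.getVert m) with hPdef
    have hP0 : P 0 := by simp only [hPdef, hg0]; omega
    set s : ℕ := Nat.findGreatest P D with hsdef
    have hsD : s ≤ D := Nat.findGreatest_le D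
    have hPs : P s := Nat.findGreatest_spec (Nat.zero_le D) hP0
    have hPD : ¬ P D := by
      simp only [hPdef, hgD]
      have : G.dist x σ = G.dist σ x := SimpleGraph.dist_comm
      omega
    have hsltD : s < D :=
      lt_of_le_of_ne hsD (fun h => hPD (h ▸ hPs))
    have hnPs1 : ¬ P (s + 1) := Nat.findGreatest_is_greatest (show s < s + 1 by omega) (by omega)
    have hlams1 : G.dist x (g.getVert (s + 1)) + 1 = a := by
      have h8 : G.dist x (g.getVert (s + 1)) + 1 ≤ a := by
        simp only [hPdef] at hnPs1; omega
      have hcm : G.dist (g.getVert (s + 1)) (g.getVert s) = 1 := by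
        rw [SimpleGraph.dist_comm]; exact hstep s hsltD
      have h9 : G.dist x (g.getVert s) ≤ G.dist x (g.getVert (s + 1)) + 1 := by
        have := hG.dist_triangle (u := x) (v := g.getVert (s + 1)) (w := g.getVert s)
        omega
      have h10 : a ≤ G.dist x (g.getVert s) := hPs
      omega
    have hlams : G.dist x (g.getVert s) = a := by
      have hcm : G.dist (g.getVert (s + 1)) (g.getVert s) = 1 := by
        rw [SimpleGraph.dist_comm]; exact hstep s hsltD
      have h9 : G.dist x (g.getVert s) ≤ G.dist x (g.getVert (s + 1)) + 1 := by
        have := hG.dist_triangle (u := x) (v := g.getVert (s + 1)) (w := g.getVert s)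
        omega
      have h10 : a ≤ G.dist x (g.getVert s) := hPs
      omega
    -- improved x-fire
    have hXF : a + G.dist u w + s ≤ G.dist u x + i := by
      have hcm : G.dist (g.getVert (s + 1)) (g.getVert s) = 1 := by
        rw [SimpleGraph.dist_comm]; exact hstep s hsltD
      have hIv1 : Itv G x (g.getVert s) (g.getVert (s + 1)) := by
        show G.dist x (g.getVert (s + 1)) + G.dist (g.getVert (s + 1)) (g.getVert s) =
          G.dist x (g.getVert s)
        omega
      have hIv2 : Itv G (g.getVert (s + 1)) u (g.getVert s) := by
        show G.dist (g.getVert (s + 1)) (g.getVert s) + G.dist (g.getVert s) u =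
          G.dist (g.getVert (s + 1)) u
        have e1 : G.dist (g.getVert s) u = G.dist u (g.getVert s) := SimpleGraph.dist_comm
        have e2 : G.dist (g.getVert (s + 1)) u = G.dist u (g.getVert (s + 1)) := SimpleGraph.dist_comm
        have := hueq s (by omega)
        have := hueq (s + 1) (by omega)
        omega
      have hadj1 : G.Adj (g.getVert (s + 1)) (g.getVert s) := dist_eq_one_iff_adj.mp (by
        rw [SimpleGraph.dist_comm]; exact hstep s hsltD)
      have hfx := hα x (g.getVert (s + 1)) (g.getVert s) u hIv1 hIv2 hadj1
      have e2 : G.dist (g.getVert (s + 1)) u = G.dist u (g.getVert (s + 1)) := SimpleGraph.dist_comm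
      have e3 : G.dist x u = G.dist u x := SimpleGraph.dist_comm
      have := hueq (s + 1) (by omega)
      omega
    -- existence of a y-up-step
    have hnuw : G.dist y (g.getVert 0) = b := by rw [hg0]; exact hwy
    have hnuD : G.dist y (g.getVert D) = b + 1 := by rw [hgD]; exact hσy
    have hex : ∃ m, m < D ∧ G.dist y (g.getVert (m + 1)) = G.dist y (g.getVert m) + 1 := by
      by_contra hcon
      push_neg at hcon
      have hmono : ∀ m, m ≤ D → G.dist y (g.getVert m) ≤ b := by
        intro m
        induction m with
        | zero => intro _; omega
        | succ n ih =>
          intro hm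
          have hcm : G.dist (g.getVert n) (g.getVert (n + 1)) = 1 := hstep n (by omega)
          have hub : G.dist y (g.getVert (n + 1)) ≤ G.dist y (g.getVert n) + 1 := by
            have := hG.dist_triangle (u := y) (v := g.getVert n) (w := g.getVert (n + 1))
            omega
          have hne := hcon n (by omega)
          have := ih (by omega)
          omega
      have := hmono D (le_refl D)
      omega
    set Q : ℕ → Prop := fun m => m < D ∧
      G.dist y (g.getVert (m + 1)) = G.dist y (g.getVert m) + 1 with hQdef
    obtain ⟨m₀, hm₀1, hm₀2⟩ := hex
    set s₂ : ℕ := Nat.findGreatest Q D with hs₂def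
    have hQs₂ : Q s₂ := Nat.findGreatest_spec (le_of_lt hm₀1) ⟨hm₀1, hm₀2⟩
    have hs₂D : s₂ < D := hQs₂.1
    have hup : G.dist y (g.getVert (s₂ + 1)) = G.dist y (g.getVert s₂) + 1 := hQs₂.2
    -- tail : beyond the last y-up-step, the y-level is at least b+1
    have htail : ∀ r m, m + r = D → s₂ < m → b + 1 ≤ G.dist y (g.getVert m) := by
      intro r
      induction r with
      | zero =>
        intro m h1 _
        have : m = D := by omega
        rw [this]; omega
      | succ n ih =>
        intro m h1 h2
        have hmD : m < D := by omega
        have hnQ : ¬ Q m := Nat.findGreatest_is_greatest h2 (by omega)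
        have hcm : G.dist (g.getVert m) (g.getVert (m + 1)) = 1 := hstep m hmD
        have h4 : G.dist y (g.getVert (m + 1)) ≤ G.dist y (g.getVert m) + 1 := by
          have := hG.dist_triangle (u := y) (v := g.getVert m) (w := g.getVert (m + 1))
          omega
        have h5 := ih (m + 1) (by omega) (by omega)
        have h6 : ¬(G.dist y (g.getVert (m + 1)) = G.dist y (g.getVert m) + 1) :=
          fun hh => hnQ ⟨hmD, hh⟩
        omega
    have hnus₂1 : b + 1 ≤ G.dist y (g.getVert (s₂ + 1)) :=
      htail (D - (s₂ + 1)) (s₂ + 1) (by omega) (by omega)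
    -- the σ-fire
    have hsf : D + G.dist y (g.getVert s₂) ≤ s₂ + b + 1 + i := by
      have hw2 := (hseg (s₂ + 1) (by omega)).2
      have hw2' := (hseg s₂ (by omega)).2
      have hcm : G.dist (g.getVert (s₂ + 1)) (g.getVert s₂) = 1 := by
        rw [SimpleGraph.dist_comm]; exact hstep s₂ hs₂D
      have e1 : G.dist σ (g.getVert (s₂ + 1)) = G.dist (g.getVert (s₂ + 1)) σ := SimpleGraph.dist_comm
      have e2 : G.dist σ (g.getVert s₂) = G.dist (g.getVert s₂) σ := SimpleGraph.dist_comm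
      have e3 : G.dist (g.getVert (s₂ + 1)) y = G.dist y (g.getVert (s₂ + 1)) := SimpleGraph.dist_comm
      have e4 : G.dist (g.getVert s₂) y = G.dist y (g.getVert s₂) := SimpleGraph.dist_comm
      have e5 : G.dist σ y = G.dist y σ := SimpleGraph.dist_comm
      have hIvA : Itv G σ (g.getVert s₂) (g.getVert (s₂ + 1)) := by
        show G.dist σ (g.getVert (s₂ + 1)) + G.dist (g.getVert (s₂ + 1)) (g.getVert s₂) =
          G.dist σ (g.getVert s₂)
        omega
      have hIvB : Itv G (g.getVert (s₂ + 1)) y (g.getVert s₂) := by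
        show G.dist (g.getVert (s₂ + 1)) (g.getVert s₂) + G.dist (g.getVert s₂) y =
          G.dist (g.getVert (s₂ + 1)) y
        omega
      have hadjB : G.Adj (g.getVert (s₂ + 1)) (g.getVert s₂) := dist_eq_one_iff_adj.mp (by
        rw [SimpleGraph.dist_comm]; exact hstep s₂ hs₂D)
      have := hα σ (g.getVert (s₂ + 1)) (g.getVert s₂) y hIvA hIvB hadjB
      omega
    rcases le_or_gt s₂ s with hss | hss
    · -- left disjunct
      left
      have hnus₂ : b ≤ G.dist y (g.getVert s₂) := by omega
      omega
    · -- right disjunct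
      right
      have hnPs₂ : ¬ P s₂ := Nat.findGreatest_is_greatest hss (by omega)
      have hlams₂ : G.dist x (g.getVert s₂) + 1 ≤ a := by
        simp only [hPdef] at hnPs₂; omega
      have hnus₂b : b + 1 ≤ G.dist y (g.getVert s₂) := by
        have htr : G.dist x y ≤ G.dist x (g.getVert s₂) + G.dist (g.getVert s₂) y :=
          hG.dist_triangle
        have e : G.dist (g.getVert s₂) y = G.dist y (g.getVert s₂) := SimpleGraph.dist_comm
        omega
      have hDs₂ : D ≤ s₂ + i := by omega
      -- extract a y-down-step after s₂
      have hexj : ∃ j, s₂ < j ∧ j < D ∧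
          G.dist y (g.getVert (j + 1)) + 1 = G.dist y (g.getVert j) := by
        by_contra hcon
        push_neg at hcon
        have hmono2 : ∀ m, s₂ + 1 ≤ m → m ≤ D →
            G.dist y (g.getVert (s₂ + 1)) ≤ G.dist y (g.getVert m) := by
          intro m
          induction m with
          | zero => intro h _; omega
          | succ n ih =>
            intro h1 h2
            by_cases hn : s₂ + 1 ≤ n
            · have hIH := ih hn (by omega)
              have hnQ : ¬ Q n := Nat.findGreatest_is_greatest (show s₂ < n by omega) (by omega)
              have hne1 : ¬(G.dist y (g.getVert (n + 1)) = G.dist y (g.getVert n) + 1) :=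
                fun hh => hnQ ⟨by omega, hh⟩
              have hne2 := hcon n (by omega) (by omega)
              have hcm : G.dist (g.getVert n) (g.getVert (n + 1)) = 1 := hstep n (by omega)
              have hub : G.dist y (g.getVert (n + 1)) ≤ G.dist y (g.getVert n) + 1 := by
                have := hG.dist_triangle (u := y) (v := g.getVert n) (w := g.getVert (n + 1))
                omega
              have hlb : G.dist y (g.getVert n) ≤ G.dist y (g.getVert (n + 1)) + 1 := by
                have := hG.dist_triangle (u := y) (v := g.getVert (n + 1)) (w := g.getVert n)
                have : G.dist (g.getVert (n + 1)) (g.getVert n) = 1 := by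
                  rw [SimpleGraph.dist_comm]; exact hstep n (by omega)
                omega
              omega
            · have hn' : n + 1 = s₂ + 1 := by omega
              rw [hn']
        have := hmono2 D (by omega) (le_refl D)
        omega
      obtain ⟨j, hj1, hj2, hj3⟩ := hexj
      have hnuj1 : b + 1 ≤ G.dist y (g.getVert (j + 1)) :=
        htail (D - (j + 1)) (j + 1) (by omega) (by omega)
      have hcmj : G.dist (g.getVert (j + 1)) (g.getVert j) = 1 := by
        rw [SimpleGraph.dist_comm]; exact hstep j hj2
      have hIvC : Itv G y (g.getVert j) (g.getVert (j + 1)) := by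
        show G.dist y (g.getVert (j + 1)) + G.dist (g.getVert (j + 1)) (g.getVert j) =
          G.dist y (g.getVert j)
        omega
      have hIvD : Itv G (g.getVert (j + 1)) u (g.getVert j) := by
        show G.dist (g.getVert (j + 1)) (g.getVert j) + G.dist (g.getVert j) u =
          G.dist (g.getVert (j + 1)) u
        have e1 : G.dist (g.getVert j) u = G.dist u (g.getVert j) := SimpleGraph.dist_comm
        have e2 : G.dist (g.getVert (j + 1)) u = G.dist u (g.getVert (j + 1)) := SimpleGraph.dist_comm
        have := hueq j (by omega)
        have := hueq (j + 1) (by omega)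
        omega
      have hadjD : G.Adj (g.getVert (j + 1)) (g.getVert j) := dist_eq_one_iff_adj.mp hcmj
      have hyf := hα y (g.getVert (j + 1)) (g.getVert j) u hIvC hIvD hadjD
      have e1 : G.dist (g.getVert (j + 1)) u = G.dist u (g.getVert (j + 1)) := SimpleGraph.dist_comm
      have e2 : G.dist y u = G.dist u y := SimpleGraph.dist_comm
      have := hueq (j + 1) (by omega)
      omega
  · -- case dist w σ = D + 1 : D ≤ i, then use the plain fire
    have hwσ : G.dist w σ = D + 1 := by omega
    have hIv1 : Itv G w σ c := by
      show G.dist w c + G.dist c σ = G.dist w σ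
      omega
    have hIv2 : Itv G c x σ := by
      show G.dist c σ + G.dist σ x = G.dist c x
      omega
    have hcon := hα w c σ x hIv1 hIv2 hadj_cσ
    have hwx' : G.dist w x = a := by rw [SimpleGraph.dist_comm]; exact hwx
    have hDi : D ≤ i := by rw [hwc, hcx, hwx'] at hcon; omega
    rcases hfire with hf | hf
    · left; omega
    · right; omega

private lemma key [Fintype V] (hG : G.Connected) {i : ℕ} (hα : AlphaI G i) (x y c : V)
    (hc : Itv G x y c) (u : V) :
    G.dist u c + G.dist x c ≤ G.dist u x + (2 * i + 1) ∨
    G.dist u c + G.dist y c ≤ G.dist u y + (2 * i + 1) := by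
  classical
  have hk0 : G.dist x c + G.dist c y = G.dist x y := hc
  have hcy : G.dist c y = G.dist y c := SimpleGraph.dist_comm
  have hxy : G.dist x y = G.dist x c + G.dist y c := by omega
  by_cases ha0 : G.dist x c = 0
  · left
    have hxc : x = c := hG.dist_eq_zero_iff.mp ha0
    have e1 : G.dist u x = G.dist u c := by rw [hxc]
    omega
  by_cases hb0 : G.dist y c = 0
  · right
    have hyc : y = c := hG.dist_eq_zero_iff.mp hb0
    have e1 : G.dist u y = G.dist u c := by rw [hyc]
    omega
  by_cases ht0 : G.dist u c = 0
  · left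
    have huc : u = c := hG.dist_eq_zero_iff.mp ht0
    have e1 : G.dist u x = G.dist c x := by rw [huc]
    have e2 : G.dist c x = G.dist x c := SimpleGraph.dist_comm
    omega
  set S : Finset V := Finset.univ.filter (fun z =>
    G.dist u z + G.dist z c = G.dist u c ∧
    ¬(G.dist x z = G.dist x c ∧ G.dist y z = G.dist y c)) with hSdef
  by_cases hS : S.Nonempty
  · obtain ⟨z₀, hz₀mem, hz₀min⟩ := S.exists_min_image (fun z => G.dist z c) hS
    rw [hSdef, Finset.mem_filter] at hz₀mem
    obtain ⟨-, hz₀I, hz₀nf⟩ := hz₀mem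
    have hz₀pos : 1 ≤ G.dist z₀ c := by
      by_contra h
      push_neg at h
      have : z₀ = c := hG.dist_eq_zero_iff.mp (by omega)
      rw [this] at hz₀nf
      exact hz₀nf ⟨rfl, rfl⟩
    by_cases hDp1 : G.dist z₀ c = 1
    · -- penultimate fire
      have hcflat : G.dist x c = G.dist x c ∧ G.dist y c = G.dist y c := ⟨rfl, rfl⟩
      rcases type_lemma hG hxy rfl rfl hDp1 hz₀nf with hty | hty
      · left
        have hIv1 : Itv G u c z₀ := hz₀I
        have hIv2 : Itv G z₀ x c := by
          show G.dist z₀ c + G.dist c x = G.dist z₀ x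
          have e1 : G.dist c x = G.dist x c := SimpleGraph.dist_comm
          have e2 : G.dist z₀ x = G.dist x z₀ := SimpleGraph.dist_comm
          omega
        have hadj : G.Adj z₀ c := dist_eq_one_iff_adj.mp hDp1
        have := hα u z₀ c x hIv1 hIv2 hadj
        have e2 : G.dist z₀ x = G.dist x z₀ := SimpleGraph.dist_comm
        omega
      · right
        have hIv1 : Itv G u c z₀ := hz₀I
        have hIv2 : Itv G z₀ y c := by
          show G.dist z₀ c + G.dist c y = G.dist z₀ y
          have e2 : G.dist z₀ y = G.dist y z₀ := SimpleGraph.dist_comm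
          omega
        have hadj : G.Adj z₀ c := dist_eq_one_iff_adj.mp hDp1
        have := hα u z₀ c y hIv1 hIv2 hadj
        have e2 : G.dist z₀ y = G.dist y z₀ := SimpleGraph.dist_comm
        omega
    · -- build the flat tip w of the suffix
      have hDp2 : 2 ≤ G.dist z₀ c := by omega
      obtain ⟨w, hzw1, hwcD⟩ := exists_step hG (p := z₀) (q := c) (by omega)
      have htr1 : G.dist u c ≤ G.dist u w + G.dist w c := hG.dist_triangle
      have htr2 : G.dist u w ≤ G.dist u z₀ + G.dist z₀ w := hG.dist_triangle
      have huwI : G.dist u w + G.dist w c = G.dist u c := by omega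
      have huz : G.dist u z₀ + 1 = G.dist u w := by omega
      have hmin : ∀ z, G.dist u z + G.dist z c = G.dist u c → G.dist z c ≤ G.dist w c →
          (G.dist x z = G.dist x c ∧ G.dist y z = G.dist y c) := by
        intro z hzI hzle
        by_contra hzn
        have hzS : z ∈ S := by
          rw [hSdef, Finset.mem_filter]
          exact ⟨Finset.mem_univ z, hzI, hzn⟩
        have := hz₀min z hzS
        omega
      have hwflat := hmin w huwI (le_refl _)
      -- plain fire
      have hfire : G.dist u w + G.dist x c ≤ G.dist u x + i ∨
          G.dist u w + G.dist y c ≤ G.dist u y + i := by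
        rcases type_lemma hG hxy hwflat.1 hwflat.2 hzw1 hz₀nf with hty | hty
        · left
          have hIv1 : Itv G u w z₀ := by
            show G.dist u z₀ + G.dist z₀ w = G.dist u w
            omega
          have hIv2 : Itv G z₀ x w := by
            show G.dist z₀ w + G.dist w x = G.dist z₀ x
            have e1 : G.dist w x = G.dist x w := SimpleGraph.dist_comm
            have e2 : G.dist z₀ x = G.dist x z₀ := SimpleGraph.dist_comm
            have := hwflat.1
            omega
          have hadj : G.Adj z₀ w := dist_eq_one_iff_adj.mp hzw1
          have := hα u z₀ w x hIv1 hIv2 hadj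
          have e2 : G.dist z₀ x = G.dist x z₀ := SimpleGraph.dist_comm
          omega
        · right
          have hIv1 : Itv G u w z₀ := by
            show G.dist u z₀ + G.dist z₀ w = G.dist u w
            omega
          have hIv2 : Itv G z₀ y w := by
            show G.dist z₀ w + G.dist w y = G.dist z₀ y
            have e1 : G.dist w y = G.dist y w := SimpleGraph.dist_comm
            have e2 : G.dist z₀ y = G.dist y z₀ := SimpleGraph.dist_comm
            have := hwflat.2
            omega
          have hadj : G.Adj z₀ w := dist_eq_one_iff_adj.mp hzw1
          have := hα u z₀ w y hIv1 hIv2 hadj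
          have e2 : G.dist z₀ y = G.dist y z₀ := SimpleGraph.dist_comm
          omega
      exact core hG hα rfl rfl hxy (by omega) (by omega) rfl hwflat.1 hwflat.2
        (by omega) hmin hfire
  · -- every vertex of I(u,c) is flat; u itself is flat
    have hallflat : ∀ z, G.dist u z + G.dist z c = G.dist u c →
        (G.dist x z = G.dist x c ∧ G.dist y z = G.dist y c) := by
      intro z hzI
      by_contra hzn
      exact hS ⟨z, by rw [hSdef, Finset.mem_filter]; exact ⟨Finset.mem_univ z, hzI, hzn⟩⟩
    have huflat : G.dist x u = G.dist x c ∧ G.dist y u = G.dist y c := by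
      apply hallflat
      have : G.dist u u = 0 := by simp
      omega
    have hfire : G.dist u u + G.dist x c ≤ G.dist u x + i ∨
        G.dist u u + G.dist y c ≤ G.dist u y + i := by
      left
      have e1 : G.dist u x = G.dist x u := SimpleGraph.dist_comm
      have e2 : G.dist u u = 0 := by simp
      have := huflat.1
      omega
    exact core hG hα rfl rfl hxy (by omega) (by omega) rfl huflat.1 huflat.2
      (by simp) (fun z h _ => hallflat z h) hfire

end Helpers

theorem stmt_13 [Fintype V] (G : SimpleGraph V) (hG : G.Connected) (i : ℕ)
    (hα : AlphaI G i) (x y c : V)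
    (hx : ecc G x = G.dist x y) (hy : ecc G y = G.dist x y)
    (hc : Itv G x y c) (hmid : min (G.dist x c) (G.dist y c) = G.dist x y / 2)
    (T : SimpleGraph V) (hT : T.IsTree) (hTsub : T ≤ G)
    (hBFS : ∀ v : V, T.dist c v = G.dist c v) (v : V) :
    ecc G v ≤ ecc T v ∧ ecc T v ≤ ecc G v + 4 * i + 3 := by
  classical
  constructor
  · -- lower bound : distances in T dominate distances in G
    apply Finset.sup_le
    intro u _
    obtain ⟨p, hp⟩ := hT.isConnected.exists_walk_length_eq_dist v u
    have h1 : G.dist v u ≤ (p.mapLe hTsub).length := dist_le _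
    have h2 : (p.mapLe hTsub).length = p.length := by
      simp [Walk.mapLe, Walk.length_map]
    have h3 : G.dist v u ≤ T.dist v u := by rw [← hp]; omega
    exact le_trans h3 (Finset.le_sup (Finset.mem_univ u))
  · -- upper bound
    apply Finset.sup_le
    intro u _
    have htri : T.dist v u ≤ T.dist v c + T.dist c u := hT.isConnected.dist_triangle
    have hvc : T.dist v c = G.dist c v := by rw [SimpleGraph.dist_comm]; exact hBFS v
    have hcu : T.dist c u = G.dist c u := hBFS u
    have kv := key hG hα x y c hc v
    have ku := key hG hα x y c hc u
    have hvx : G.dist v x ≤ ecc G v := Finset.le_sup (Finset.mem_univ x)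
    have hvy : G.dist v y ≤ ecc G v := Finset.le_sup (Finset.mem_univ y)
    have hux : G.dist x u ≤ G.dist x y := by
      have : G.dist x u ≤ ecc G x := Finset.le_sup (Finset.mem_univ u)
      omega
    have huy : G.dist y u ≤ G.dist x y := by
      have : G.dist y u ≤ ecc G y := Finset.le_sup (Finset.mem_univ u)
      omega
    have e1 : G.dist c v = G.dist v c := SimpleGraph.dist_comm
    have e2 : G.dist c u = G.dist u c := SimpleGraph.dist_comm
    have e3 : G.dist u x = G.dist x u := SimpleGraph.dist_comm
    have e4 : G.dist u y = G.dist y u := SimpleGraph.dist_comm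
    have hk0 : G.dist x c + G.dist c y = G.dist x y := hc
    have e5 : G.dist c y = G.dist y c := SimpleGraph.dist_comm
    rcases min_cases (G.dist x c) (G.dist y c) with ⟨hm1, hm2⟩ | ⟨hm1, hm2⟩ <;>
      rcases kv with h | h <;> rcases ku with h' | h' <;> omega
end
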